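/- If N and M are disjoint workflow nets and n is a node of N of the appropriate type (a place if M is a pWF net, a transition if M is a tWF net), then the substitution N ⊗_n M is again a workflow net (of the same kind, pWF or tWF, as N). -/

import Mathlib

structure Net where
  P : Finset ℕ
  T : Finset ℕ
  F : Finset (ℕ × ℕ)
  I : Finset ℕ
  O : Finset ℕ

namespace Net

def nodes (N : Net) : Finset ℕ := N.P ∪ N.T

def IsPetri (N : Net) : Prop :=
  Disjoint N.P N.T ∧ ∀ e ∈ N.F, (e.1 ∈ N.P ∧ e.2 ∈ N.T) ∨ (e.1 ∈ N.T ∧ e.2 ∈ N.P)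

def edge (N : Net) (x y : ℕ) : Prop := (x, y) ∈ N.F

def pathReach (N : Net) : ℕ → ℕ → Prop := Relation.ReflTransGen N.edge

def Connected (N : Net) : Prop :=
  (∀ x ∈ N.nodes, ∃ i ∈ N.I, N.pathReach i x) ∧
  (∀ x ∈ N.nodes, ∃ o ∈ N.O, N.pathReach x o)

/-- place workflow net -/
def IsPWF (N : Net) : Prop :=
  N.IsPetri ∧ N.I ⊆ N.P ∧ N.O ⊆ N.P ∧ N.I.Nonempty ∧ N.O.Nonempty ∧ N.Connected

/-- transition workflow net -/
def IsTWF (N : Net) : Prop :=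
  N.IsPetri ∧ N.I ⊆ N.T ∧ N.O ⊆ N.T ∧ N.I.Nonempty ∧ N.O.Nonempty ∧ N.Connected

def IsWF (N : Net) : Prop := N.IsPWF ∨ N.IsTWF

abbrev Marking := ℕ → ℕ

def pre (N : Net) (t : ℕ) : Marking := fun p => if (p, t) ∈ N.F then 1 else 0
def post (N : Net) (t : ℕ) : Marking := fun p => if (t, p) ∈ N.F then 1 else 0
def enabled (N : Net) (t : ℕ) (m : Marking) : Prop := t ∈ N.T ∧ N.pre t ≤ m
def fire (N : Net) (t : ℕ) (m : Marking) : Marking := fun p => m p - N.pre t p + N.post t p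
def stepRel (N : Net) (m m' : Marking) : Prop := ∃ t, N.enabled t m ∧ m' = N.fire t m
def reach (N : Net) : Marking → Marking → Prop := Relation.ReflTransGen N.stepRel

/-- the marking with `k` tokens on each element of `S` -/
def bag (k : ℕ) (S : Finset ℕ) : Marking := fun p => if p ∈ S then k else 0

def kSound (N : Net) (k : ℕ) : Prop :=
  ∀ m, N.reach (bag k N.I) m → N.reach m (bag k N.O)

def starSound (N : Net) : Prop := ∀ k, 1 ≤ k → N.kSound k

def subSound (N : Net) : Prop :=
  ∀ k k' : ℕ, k' ≤ k → ∀ m : Marking,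
    N.reach (bag k N.I) (m + bag k' N.O) → N.reach m (bag (k - k') N.O)

/-- place completion of a tWF net -/
def pc (N : Net) (pi po : ℕ) : Net where
  P := insert pi (insert po N.P)
  T := N.T
  F := (N.I.image fun t => (pi, t)) ∪ (N.O.image fun t => (t, po)) ∪ N.F
  I := {pi}
  O := {po}

/-- transition completion of a pWF net -/
def tc (N : Net) (t_i t_o : ℕ) : Net where
  P := N.P
  T := insert t_i (insert t_o N.T)
  F := (N.I.image fun p => (t_i, p)) ∪ (N.O.image fun p => (p, t_o)) ∪ N.F
  I := {t_i}
  O := {t_o}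

/-- *-soundness of a tWF net: its place completion (for fresh names) is *-sound -/
def tStarSound (N : Net) : Prop :=
  ∀ pi po : ℕ, pi ∉ N.nodes → po ∉ N.nodes → pi ≠ po → (N.pc pi po).starSound

/-- sub-soundness of a tWF net: its place completion (for fresh names) is sub-sound -/
def tSubSound (N : Net) : Prop :=
  ∀ pi po : ℕ, pi ∉ N.nodes → po ∉ N.nodes → pi ≠ po → (N.pc pi po).subSound

/-- preset of a node, as a finset -/
def inEdges (N : Net) (n : ℕ) : Finset ℕ := (N.F.filter fun e => e.2 = n).image Prod.fst
/-- postset of a node, as a finset -/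
def outEdges (N : Net) (n : ℕ) : Finset ℕ := (N.F.filter fun e => e.1 = n).image Prod.snd

/-- substitution of the node `n` of `N` by the net `M` (place or transition substitution,
depending on the type of `n`): each input node of `M` inherits the preset of `n`, each
output node of `M` inherits the postset of `n`. -/
def subst (N : Net) (n : ℕ) (M : Net) : Net where
  P := (N.P.erase n) ∪ M.P
  T := (N.T.erase n) ∪ M.T
  F := (N.F.filter fun e => e.1 ≠ n ∧ e.2 ≠ n) ∪ M.F
        ∪ (N.inEdges n ×ˢ M.I) ∪ (M.O ×ˢ N.outEdges n)
  I := if n ∈ N.I then (N.I.erase n) ∪ M.I else N.I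
  O := if n ∈ N.O then (N.O.erase n) ∪ M.O else N.O

def Acyclic (N : Net) : Prop := ∀ x, ¬ Relation.TransGen N.edge x x

/-- AND net condition (on top of being a WF net) -/
def IsAND (N : Net) : Prop :=
  N.Acyclic ∧ ∀ p ∈ N.P,
    ((p ∈ N.I ∧ (N.inEdges p).card = 0) ∨ (p ∉ N.I ∧ (N.inEdges p).card = 1)) ∧
    ((p ∈ N.O ∧ (N.outEdges p).card = 0) ∨ (p ∉ N.O ∧ (N.outEdges p).card = 1))

/-- OR net condition (on top of being a WF net) -/
def IsOR (N : Net) : Prop :=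
  ∀ t ∈ N.T,
    ((t ∈ N.I ∧ (N.inEdges t).card = 0) ∨ (t ∉ N.I ∧ (N.inEdges t).card = 1)) ∧
    ((t ∈ N.O ∧ (N.outEdges t).card = 0) ∨ (t ∉ N.O ∧ (N.outEdges t).card = 1))

end Net

open Net

lemma mem_inEdges {N : Net} {a n : ℕ} : a ∈ N.inEdges n ↔ (a, n) ∈ N.F := by
  simp [Net.inEdges]

lemma mem_outEdges {N : Net} {b n : ℕ} : b ∈ N.outEdges n ↔ (n, b) ∈ N.F := by
  simp [Net.outEdges]

variable {N M : Net} {n : ℕ}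

lemma edgeN (ha : _root_.Ne a n) (hb : b ≠ n) (h : N.edge a b) : (N.subst n M).edge a b := by
  simp only [Net.edge, Net.subst, Finset.mem_union, Finset.mem_filter]
  exact Or.inl (Or.inl (Or.inl ⟨h, ha, hb⟩))

lemma edgeM (h : M.edge a b) : (N.subst n M).edge a b := by
  simp only [Net.edge, Net.subst, Finset.mem_union]
  exact Or.inl (Or.inl (Or.inr h))

lemma edgeIn (h : (a, n) ∈ N.F) (hi : i ∈ M.I) : (N.subst n M).edge a i := by
  simp only [Net.edge, Net.subst, Finset.mem_union, Finset.mem_product]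
  exact Or.inl (Or.inr ⟨mem_inEdges.2 h, hi⟩)

lemma edgeOut (h : (n, b) ∈ N.F) (ho : o ∈ M.O) : (N.subst n M).edge o b := by
  simp only [Net.edge, Net.subst, Finset.mem_union, Finset.mem_product]
  exact Or.inr ⟨ho, mem_outEdges.2 h⟩

lemma pathM (h : M.pathReach a b) : (N.subst n M).pathReach a b :=
  Relation.ReflTransGen.mono (fun _ _ => edgeM) _ _ h

lemma noLoop (hP : N.IsPetri) : ¬ N.edge n n := by
  intro h
  rcases hP.2 _ h with ⟨h1, h2⟩ | ⟨h1, h2⟩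
  · exact Finset.disjoint_left.1 hP.1 h1 h2
  · exact Finset.disjoint_left.1 hP.1 h2 h1

lemma lemA (hP : N.IsPetri) (hMc : M.Connected) (hMI : M.I.Nonempty)
    (hIn : M.I ⊆ M.nodes) {x y : ℕ} (hp : N.pathReach x y) (hy : y ≠ n) :
    (x ≠ n → (N.subst n M).pathReach x y) ∧
    (x = n → ∀ o ∈ M.O, (N.subst n M).pathReach o y) := by
  induction hp using Relation.ReflTransGen.head_induction_on with
  | refl => exact ⟨fun _ => .refl, fun hx => absurd hx hy⟩
  | head hac hcy ih =>
    constructor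
    · intro ha
      rename_i a c
      by_cases hc : c = n
      · rw [hc] at hac
        obtain ⟨i, hi⟩ := hMI
        obtain ⟨o, ho, hio⟩ := hMc.2 i (hIn hi)
        exact .trans (.single (edgeIn hac hi)) (.trans (pathM hio) (ih.2 hc o ho))
      · exact .head (edgeN ha hc hac) (ih.1 hc)
    · rename_i a c
      intro ha; rw [ha] at hac
      intro o ho
      have hc : c ≠ n := fun hh => by rw [hh] at hac; exact noLoop hP hac
      exact .head (edgeOut hac ho) (ih.1 hc)

lemma lemB (hP : N.IsPetri) (hMc : M.Connected) (hMI : M.I.Nonempty)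
    (hIn : M.I ⊆ M.nodes) {x y : ℕ} (hp : N.pathReach x y) (hx : x ≠ n) :
    (y ≠ n → (N.subst n M).pathReach x y) ∧
    (y = n → ∀ i ∈ M.I, (N.subst n M).pathReach x i) := by
  induction hp with
  | refl => exact ⟨fun _ => .refl, fun hh => absurd hh hx⟩
  | tail hxb hbc ih =>
    rename_i b c
    constructor
    · intro hc
      by_cases hb : b = n
      · rw [hb] at hbc
        obtain ⟨i, hi⟩ := hMI
        obtain ⟨o, ho, hio⟩ := hMc.2 i (hIn hi)
        exact ((ih.2 hb i hi).trans (pathM hio)).trans (.single (edgeOut hbc ho))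
      · exact (ih.1 hb).tail (edgeN hb hc hbc)
    · intro hc; rw [hc] at hbc; intro i hi
      have hb : b ≠ n := fun hh => by rw [hh] at hbc; exact noLoop hP hbc
      exact (ih.1 hb).tail (edgeIn hbc hi)

lemma memSI (hiI : i ∈ N.I) (hi : i ≠ n) : i ∈ (N.subst n M).I := by
  simp only [Net.subst]
  split_ifs
  · exact Finset.mem_union_left _ (Finset.mem_erase.2 ⟨hi, hiI⟩)
  · exact hiI

lemma memSI' (hn : n ∈ N.I) (hi : i ∈ M.I) : i ∈ (N.subst n M).I := by
  simp only [Net.subst, if_pos hn]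
  exact Finset.mem_union_right _ hi

lemma memSO (hiO : o ∈ N.O) (hi : o ≠ n) : o ∈ (N.subst n M).O := by
  simp only [Net.subst]
  split_ifs
  · exact Finset.mem_union_left _ (Finset.mem_erase.2 ⟨hi, hiO⟩)
  · exact hiO

lemma memSO' (hn : n ∈ N.O) (ho : o ∈ M.O) : o ∈ (N.subst n M).O := by
  simp only [Net.subst, if_pos hn]
  exact Finset.mem_union_right _ ho

lemma nodes_subst (hx : x ∈ (N.subst n M).nodes) :
    (x ∈ N.nodes ∧ x ≠ n) ∨ x ∈ M.nodes := by
  simp only [Net.subst, Net.nodes, Finset.mem_union, Finset.mem_erase] at hx ⊢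
  tauto

lemma subst_conn (hP : N.IsPetri) (hNc : N.Connected) (hn : n ∈ N.nodes)
    (hMc : M.Connected) (hMI : M.I.Nonempty) (hIn : M.I ⊆ M.nodes) :
    (N.subst n M).Connected := by
  constructor
  · intro x hx
    rcases nodes_subst hx with ⟨hxN, hxn⟩ | hxM
    · obtain ⟨i, hiI, hix⟩ := hNc.1 x hxN
      by_cases hi : i = n
      · obtain ⟨i', hi'⟩ := id hMI
        obtain ⟨o', ho', hio'⟩ := hMc.2 i' (hIn hi')
        refine ⟨i', memSI' (hi ▸ hiI) hi', ?_⟩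
        exact (pathM hio').trans ((lemA hP hMc hMI hIn hix hxn).2 hi o' ho')
      · exact ⟨i, memSI hiI hi, (lemA hP hMc hMI hIn hix hxn).1 hi⟩
    · obtain ⟨i, hiI, hix⟩ := hMc.1 x hxM
      by_cases hnI : n ∈ N.I
      · exact ⟨i, memSI' hnI hiI, pathM hix⟩
      · obtain ⟨i0, hi0, hp0⟩ := hNc.1 n hn
        have hi0n : i0 ≠ n := fun hh => hnI (hh ▸ hi0)
        exact ⟨i0, memSI hi0 hi0n,
          ((lemB hP hMc hMI hIn hp0 hi0n).2 rfl i hiI).trans (pathM hix)⟩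
  · intro x hx
    rcases nodes_subst hx with ⟨hxN, hxn⟩ | hxM
    · obtain ⟨o, hoO, hxo⟩ := hNc.2 x hxN
      by_cases ho : o = n
      · obtain ⟨i', hi'⟩ := id hMI
        obtain ⟨o', ho', hio'⟩ := hMc.2 i' (hIn hi')
        refine ⟨o', memSO' (ho ▸ hoO) ho', ?_⟩
        exact ((lemB hP hMc hMI hIn hxo hxn).2 ho i' hi').trans (pathM hio')
      · exact ⟨o, memSO hoO ho, (lemB hP hMc hMI hIn hxo hxn).1 ho⟩
    · obtain ⟨o, hoO, hxo⟩ := hMc.2 x hxM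
      by_cases hnO : n ∈ N.O
      · exact ⟨o, memSO' hnO hoO, pathM hxo⟩
      · obtain ⟨o0, ho0, hp0⟩ := hNc.2 n hn
        have ho0n : o0 ≠ n := fun hh => hnO (hh ▸ ho0)
        exact ⟨o0, memSO ho0 ho0n,
          (pathM hxo).trans ((lemA hP hMc hMI hIn hp0 ho0n).2 rfl o hoO)⟩

lemma subst_petri (hd : Disjoint N.nodes M.nodes) (hNP : N.IsPetri) (hMP : M.IsPetri)
    (hh : (n ∈ N.P ∧ M.I ⊆ M.P ∧ M.O ⊆ M.P) ∨ (n ∈ N.T ∧ M.I ⊆ M.T ∧ M.O ⊆ M.T)) :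
    (N.subst n M).IsPetri := by
  have hPMT : Disjoint N.P M.T :=
    Finset.disjoint_of_subset_left Finset.subset_union_left
      (Finset.disjoint_of_subset_right Finset.subset_union_right hd)
  have hTMP : Disjoint N.T M.P :=
    Finset.disjoint_of_subset_left Finset.subset_union_right
      (Finset.disjoint_of_subset_right Finset.subset_union_left hd)
  constructor
  · simp only [Net.subst]
    refine Finset.disjoint_union_left.2 ⟨Finset.disjoint_union_right.2 ⟨?_, ?_⟩,
      Finset.disjoint_union_right.2 ⟨?_, ?_⟩⟩
    · exact Finset.disjoint_of_subset_left (Finset.erase_subset _ _)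
        (Finset.disjoint_of_subset_right (Finset.erase_subset _ _) hNP.1)
    · exact Finset.disjoint_of_subset_left (Finset.erase_subset _ _) hPMT
    · exact Finset.disjoint_of_subset_right (Finset.erase_subset _ _) hTMP.symm
    · exact hMP.1
  · intro e he
    simp only [Net.subst, Finset.mem_union, Finset.mem_filter, Finset.mem_product] at he
    have memP : ∀ {z}, z ∈ N.P → z ≠ n → z ∈ (N.subst n M).P := fun hz hzn =>
      Finset.mem_union_left _ (Finset.mem_erase.2 ⟨hzn, hz⟩)
    have memT : ∀ {z}, z ∈ N.T → z ≠ n → z ∈ (N.subst n M).T := fun hz hzn =>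
      Finset.mem_union_left _ (Finset.mem_erase.2 ⟨hzn, hz⟩)
    have memMP : ∀ {z}, z ∈ M.P → z ∈ (N.subst n M).P := fun hz =>
      Finset.mem_union_right _ hz
    have memMT : ∀ {z}, z ∈ M.T → z ∈ (N.subst n M).T := fun hz =>
      Finset.mem_union_right _ hz
    rcases he with ((⟨heF, h1, h2⟩ | heM) | ⟨hin, hiI⟩) | ⟨hoO, hout⟩
    · rcases hNP.2 e heF with ⟨ha, hb⟩ | ⟨ha, hb⟩
      · exact Or.inl ⟨memP ha h1, memT hb h2⟩
      · exact Or.inr ⟨memT ha h1, memP hb h2⟩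
    · rcases hMP.2 e heM with ⟨ha, hb⟩ | ⟨ha, hb⟩
      · exact Or.inl ⟨memMP ha, memMT hb⟩
      · exact Or.inr ⟨memMT ha, memMP hb⟩
    · -- e = (a, i), (a, n) ∈ N.F, i ∈ M.I
      have haF : (e.1, n) ∈ N.F := mem_inEdges.1 hin
      rcases hh with ⟨hnP, hMIP, _⟩ | ⟨hnT, hMIT, _⟩
      · rcases hNP.2 _ haF with ⟨_, hb⟩ | ⟨ha, _⟩
        · exact absurd hb (Finset.disjoint_left.1 hNP.1 hnP)
        · exact Or.inr ⟨memT ha (fun hh => Finset.disjoint_left.1 hNP.1 hnP (hh ▸ ha)),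
            memMP (hMIP hiI)⟩
      · rcases hNP.2 _ haF with ⟨ha, _⟩ | ⟨_, hb⟩
        · exact Or.inl ⟨memP ha (fun hh => Finset.disjoint_left.1 hNP.1 (hh ▸ ha) hnT),
            memMT (hMIT hiI)⟩
        · exact absurd hnT (Finset.disjoint_left.1 hNP.1 hb)
    · -- e = (o, b), o ∈ M.O, (n, b) ∈ N.F
      have hbF : (n, e.2) ∈ N.F := mem_outEdges.1 hout
      rcases hh with ⟨hnP, _, hMOP⟩ | ⟨hnT, _, hMOT⟩
      · rcases hNP.2 _ hbF with ⟨_, hb⟩ | ⟨ha, _⟩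
        · exact Or.inl ⟨memMP (hMOP hoO),
            memT hb (fun hh => Finset.disjoint_left.1 hNP.1 hnP (hh ▸ hb))⟩
        · exact absurd ha (Finset.disjoint_left.1 hNP.1 hnP)
      · rcases hNP.2 _ hbF with ⟨ha, _⟩ | ⟨_, hb⟩
        · exact absurd hnT (Finset.disjoint_left.1 hNP.1 ha)
        · exact Or.inr ⟨memMT (hMOT hoO),
            memP hb (fun hh => Finset.disjoint_left.1 hNP.1 (hh ▸ hb) hnT)⟩


theorem stmt5 (N M : Net) (n : ℕ) (hd : Disjoint N.nodes M.nodes)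
    (h : (M.IsPWF ∧ n ∈ N.P) ∨ (M.IsTWF ∧ n ∈ N.T)) :
    (N.IsPWF → (N.subst n M).IsPWF) ∧ (N.IsTWF → (N.subst n M).IsTWF) := by
  have hMP : M.IsPetri := h.elim (fun x => x.1.1) (fun x => x.1.1)
  have hMc : M.Connected := h.elim (fun x => x.1.2.2.2.2.2) (fun x => x.1.2.2.2.2.2)
  have hMI : M.I.Nonempty := h.elim (fun x => x.1.2.2.2.1) (fun x => x.1.2.2.2.1)
  have hMO : M.O.Nonempty := h.elim (fun x => x.1.2.2.2.2.1) (fun x => x.1.2.2.2.2.1)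
  have hIn : M.I ⊆ M.nodes :=
    h.elim (fun x => x.1.2.1.trans Finset.subset_union_left)
      (fun x => x.1.2.1.trans Finset.subset_union_right)
  have hn : n ∈ N.nodes :=
    h.elim (fun x => Finset.mem_union_left _ x.2) (fun x => Finset.mem_union_right _ x.2)
  have hh : (n ∈ N.P ∧ M.I ⊆ M.P ∧ M.O ⊆ M.P) ∨ (n ∈ N.T ∧ M.I ⊆ M.T ∧ M.O ⊆ M.T) :=
    h.elim (fun x => Or.inl ⟨x.2, x.1.2.1, x.1.2.2.1⟩)
      (fun x => Or.inr ⟨x.2, x.1.2.1, x.1.2.2.1⟩)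
  constructor
  · rintro ⟨hNP, hNI, hNO, hNIne, hNOne, hNc⟩
    have key : n ∈ N.P → M.I ⊆ M.P ∧ M.O ⊆ M.P := fun hnP =>
      hh.elim (fun x => ⟨x.2.1, x.2.2⟩)
        (fun x => absurd x.1 (Finset.disjoint_left.1 hNP.1 hnP))
    refine ⟨subst_petri hd hNP hMP hh, ?_, ?_, ?_, ?_, subst_conn hNP hNc hn hMc hMI hIn⟩
    · show (N.subst n M).I ⊆ (N.subst n M).P
      simp only [Net.subst]
      split_ifs with hnI
      · exact Finset.union_subset_union (Finset.erase_subset_erase _ hNI) (key (hNI hnI)).1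
      · intro i hi
        exact Finset.mem_union_left _ (Finset.mem_erase.2 ⟨fun h2 => hnI (h2 ▸ hi), hNI hi⟩)
    · show (N.subst n M).O ⊆ (N.subst n M).P
      simp only [Net.subst]
      split_ifs with hnO
      · exact Finset.union_subset_union (Finset.erase_subset_erase _ hNO) (key (hNO hnO)).2
      · intro o ho
        exact Finset.mem_union_left _ (Finset.mem_erase.2 ⟨fun h2 => hnO (h2 ▸ ho), hNO ho⟩)
    · show ((N.subst n M).I).Nonempty
      simp only [Net.subst]
      split_ifs
      · obtain ⟨i, hi⟩ := id hMI; exact ⟨i, Finset.mem_union_right _ hi⟩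
      · exact hNIne
    · show ((N.subst n M).O).Nonempty
      simp only [Net.subst]
      split_ifs
      · obtain ⟨o, ho⟩ := id hMO; exact ⟨o, Finset.mem_union_right _ ho⟩
      · exact hNOne
  · rintro ⟨hNP, hNI, hNO, hNIne, hNOne, hNc⟩
    have key : n ∈ N.T → M.I ⊆ M.T ∧ M.O ⊆ M.T := fun hnT =>
      hh.elim (fun x => absurd hnT (Finset.disjoint_left.1 hNP.1 x.1))
        (fun x => ⟨x.2.1, x.2.2⟩)
    refine ⟨subst_petri hd hNP hMP hh, ?_, ?_, ?_, ?_, subst_conn hNP hNc hn hMc hMI hIn⟩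
    · show (N.subst n M).I ⊆ (N.subst n M).T
      simp only [Net.subst]
      split_ifs with hnI
      · exact Finset.union_subset_union (Finset.erase_subset_erase _ hNI) (key (hNI hnI)).1
      · intro i hi
        exact Finset.mem_union_left _ (Finset.mem_erase.2 ⟨fun h2 => hnI (h2 ▸ hi), hNI hi⟩)
    · show (N.subst n M).O ⊆ (N.subst n M).T
      simp only [Net.subst]
      split_ifs with hnO
      · exact Finset.union_subset_union (Finset.erase_subset_erase _ hNO) (key (hNO hnO)).2
      · intro o ho
        exact Finset.mem_union_left _ (Finset.mem_erase.2 ⟨fun h2 => hnO (h2 ▸ ho), hNO ho⟩)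
    · show ((N.subst n M).I).Nonempty
      simp only [Net.subst]
      split_ifs
      · obtain ⟨i, hi⟩ := id hMI; exact ⟨i, Finset.mem_union_right _ hi⟩
      · exact hNIne
    · show ((N.subst n M).O).Nonempty
      simp only [Net.subst]
      split_ifs
      · obtain ⟨o, ho⟩ := id hMO; exact ⟨o, Finset.mem_union_right _ ho⟩
      · exact hNOne
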